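/- For every word v over {a,b}, |ψ(v)| = |ψ(v~)|, where v~ is the reversal of v. -/

import Mathlib

def palClosure (w : List Bool) : List Bool :=
  let k := Nat.find (p := fun k => (w.drop k).reverse = w.drop k)
    ⟨w.length, by simp⟩
  w.take k ++ w.drop k ++ (w.take k).reverse

def psi (v : List Bool) : List Bool := v.foldl (fun w x => palClosure (w ++ [x])) []

def E (v : List Bool) : List Bool := v.map (!·)

def mu (x : Bool) (w : List Bool) : List Bool := w.flatMap (fun y => if y = x then [x] else [x, y])

def muW : List Bool → List Bool → List Bool
  | [], w => w
  | x :: v, w => mu x (muW v w)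

def vN (n : ℕ) : List Bool := (List.range n).map (fun i => decide (i % 2 = 1))

def fibF : ℕ → ℕ
  | 0 => 1
  | 1 => 1
  | n + 2 => fibF (n + 1) + fibF n

def HasPeriod (w : List Bool) (p : ℕ) : Prop :=
  0 < p ∧ ∀ i j (hi : i < w.length) (hj : j < w.length),
    i % p = j % p → w.get ⟨i, hi⟩ = w.get ⟨j, hj⟩

noncomputable def minPeriod (w : List Bool) : ℕ := sInf {p | HasPeriod w p}

def dOp : List Bool → List Bool
  | x :: y :: u => y :: x :: u
  | w => w

def cOp (v : List Bool) : List Bool := (dOp v.reverse).reverse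

def contAux : List ℕ → ℕ
  | [] => 1
  | [a] => a
  | a :: b :: t => a * contAux (b :: t) + contAux t

namespace St5

/-- the minimal index such that the suffix from there is a palindrome -/
noncomputable def kk (w : List Bool) : ℕ :=
  Nat.find (p := fun k => (w.drop k).reverse = w.drop k) ⟨w.length, by simp⟩

lemma kk_spec (w : List Bool) : (w.drop (kk w)).reverse = w.drop (kk w) :=
  Nat.find_spec (p := fun k => (w.drop k).reverse = w.drop k) ⟨w.length, by simp⟩

lemma kk_min {w : List Bool} {i : ℕ} (h : (w.drop i).reverse = w.drop i) : kk w ≤ i :=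
  Nat.find_min' _ h

lemma kk_le (w : List Bool) : kk w ≤ w.length := kk_min (by simp)

lemma plc_eq (w : List Bool) : palClosure w = w ++ (w.take (kk w)).reverse := by
  show w.take (kk w) ++ w.drop (kk w) ++ (w.take (kk w)).reverse = _
  rw [List.take_append_drop]

lemma length_plc (w : List Bool) : (palClosure w).length = w.length + kk w := by
  rw [plc_eq]
  simp [Nat.min_eq_left (kk_le w)]

lemma prefix_plc (w : List Bool) : w <+: palClosure w := ⟨_, (plc_eq w).symm⟩

lemma rev_eq (w : List Bool) : w.reverse = w.drop (kk w) ++ (w.take (kk w)).reverse := by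
  conv_lhs => rw [← List.take_append_drop (kk w) w]
  rw [List.reverse_append, kk_spec]

lemma pal_plc (w : List Bool) : (palClosure w).reverse = palClosure w := by
  rw [plc_eq, List.reverse_append, List.reverse_reverse, rev_eq,
    ← List.append_assoc, List.take_append_drop]

lemma plc_min {w q : List Bool} (hq : q.reverse = q) (hp : w <+: q) :
    w.length + kk w ≤ q.length := by
  obtain ⟨t, rfl⟩ := hp
  by_cases h : kk w ≤ t.length
  · simp; omega
  · exfalso
    push_neg at h
    have hm : t.length ≤ w.length := le_trans (le_of_lt h) (kk_le w)
    -- q = w ++ t, reverse q = rev t ++ rev w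
    have h1 : t.reverse ++ w.reverse = w ++ t := by
      rw [← List.reverse_append, hq]
    have h2 : w.reverse = w.drop t.length ++ t := by
      have := congrArg (List.drop t.length) h1
      rwa [List.drop_append_of_le_length hm, List.drop_left' (by simp)] at this
    have h3 : (w.drop t.length).reverse = w.drop t.length := by
      have := congrArg (List.take (w.length - t.length)) h2
      rw [← List.reverse_drop, List.take_left' (by simp)] at this
      exact this
    exact absurd (kk_min h3) (not_le.mpr h)


lemma plc_unique {w q : List Bool} (hq : q.reverse = q) (hp : w <+: q)
    (hl : q.length = w.length + kk w) : q = palClosure w := by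
  obtain ⟨t, rfl⟩ := hp
  have ht : t.length = kk w := by simpa using hl
  have hrev : t.reverse = w.take (kk w) := by
    have h1 : t = (w ++ t).drop w.length := by rw [List.drop_left]
    have h2 : t.reverse = ((w ++ t).drop w.length).reverse := by rw [← h1]
    rw [List.reverse_drop, hq, List.take_append_of_le_length (by simp [ht, kk_le])] at h2
    simpa [ht] using h2
  have : t = (w.take (kk w)).reverse := by rw [← hrev, List.reverse_reverse]
  rw [this, plc_eq]

/-! ### mu lemmas -/

lemma mu_nil (x : Bool) : mu x [] = [] := rfl

lemma mu_append (x : Bool) (u v : List Bool) : mu x (u ++ v) = mu x u ++ mu x v := by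
  simp [mu]

lemma mu_cons (x z : Bool) (w : List Bool) :
    mu x (z :: w) = x :: (if z = x then mu x w else z :: mu x w) := by
  by_cases h : z = x <;> simp [mu, h]

lemma length_mu (x : Bool) (w : List Bool) :
    (mu x w).length = w.length + w.count (!x) := by
  induction w with
  | nil => rfl
  | cons z w ih =>
    rw [mu_cons]
    by_cases h : z = x
    · have : z ≠ !x := by simp [h]
      simp [h, List.count_cons, this, ih]
      omega
    · have hz : z = !x := by cases z <;> cases x <;> simp_all
      simp [h, List.count_cons, hz, ih]
      omega

lemma count_mu_self (x : Bool) (w : List Bool) : (mu x w).count x = w.length := by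
  induction w with
  | nil => rfl
  | cons z w ih =>
    rw [mu_cons]
    by_cases h : z = x
    · simp [h, List.count_cons, ih]
    · simp [h, List.count_cons, ih, Ne.symm h]

lemma count_mu_not (x : Bool) (w : List Bool) : (mu x w).count (!x) = w.count (!x) := by
  induction w with
  | nil => rfl
  | cons z w ih =>
    rw [mu_cons]
    by_cases h : z = x
    · have : z ≠ !x := by simp [h]
      simp [h, List.count_cons, this, ih]
    · have hz : z = !x := by cases z <;> cases x <;> simp_all
      simp [h, List.count_cons, hz, ih]

lemma mu_rev (x : Bool) (w : List Bool) :
    (mu x w ++ [x]).reverse = mu x w.reverse ++ [x] := by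
  induction w with
  | nil => rfl
  | cons z w ih =>
    have hblock : mu x (z :: w) = (if z = x then [x] else [x, z]) ++ mu x w := by
      by_cases h : z = x <;> simp [mu, h]
    have hblock2 : mu x (w.reverse ++ [z])
        = mu x w.reverse ++ (if z = x then [x] else [x, z]) := by
      rw [mu_append]; by_cases h : z = x <;> simp [mu, h]
    rw [hblock, List.append_assoc, List.reverse_append, ih, List.reverse_cons, hblock2]
    by_cases h : z = x <;> simp [h, List.append_assoc]

lemma length_mu_rev (x : Bool) (w : List Bool) :
    (mu x w.reverse).length = (mu x w).length := by
  simp [length_mu]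

lemma mu_inj {x : Bool} : ∀ {u v : List Bool}, mu x u = mu x v → u = v := by
  intro u
  induction u with
  | nil =>
    intro v h
    cases v with
    | nil => rfl
    | cons z v => rw [mu_cons] at h; exact absurd h.symm (by simp [mu])
  | cons z u ih =>
    intro v h
    cases v with
    | nil => rw [mu_cons] at h; exact absurd h (by simp [mu])
    | cons z' v =>
      rw [mu_cons, mu_cons] at h
      have h' := List.tail_eq_of_cons_eq h
      by_cases h1 : z = x <;> by_cases h2 : z' = x
      · subst h1; subst h2
        rw [if_pos rfl, if_pos rfl] at h'
        rw [ih h']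
      · rw [if_pos h1, if_neg h2] at h'
        exfalso
        cases u with
        | nil => exact absurd h'.symm (by simp [mu])
        | cons c u' =>
          rw [mu_cons] at h'
          have := List.head_eq_of_cons_eq h'
          exact h2 (by rw [← this])
      · rw [if_neg h1, if_pos h2] at h'
        exfalso
        cases v with
        | nil => exact absurd h' (by simp [mu])
        | cons c v' =>
          rw [mu_cons] at h'
          have := List.head_eq_of_cons_eq h'.symm
          exact h1 (by rw [← this])
      · rw [if_neg h1, if_neg h2] at h'
        have hz : z = z' := List.head_eq_of_cons_eq h'
        subst hz
        rw [ih (List.tail_eq_of_cons_eq h')]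

lemma pal_of_mu_pal {x : Bool} {t : List Bool}
    (h : (mu x t ++ [x]).reverse = mu x t ++ [x]) : t.reverse = t := by
  rw [mu_rev] at h
  exact mu_inj (by simpa using h)

lemma mu_pal_of_pal {x : Bool} {t : List Bool} (h : t.reverse = t) :
    (mu x t ++ [x]).reverse = mu x t ++ [x] := by
  rw [mu_rev, h]

/-! ### suffix structure -/

lemma suffix_head_x {x : Bool} : ∀ {v r : List Bool}, x :: r <:+ mu x v ++ [x] →
    ∃ t, t <:+ v ∧ x :: r = mu x t ++ [x] := by
  intro v
  induction v with
  | nil =>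
    intro r h
    simp only [mu_nil, List.nil_append] at h
    rw [List.suffix_cons_iff] at h
    rcases h with h | h
    · exact ⟨[], List.nil_suffix, by simpa [mu] using h⟩
    · simp at h
  | cons z v ih =>
    intro r h
    by_cases hz : z = x
    · subst hz
      rw [show mu z (z :: v) ++ [z] = z :: (mu z v ++ [z]) by simp [mu_cons]] at h
      rw [List.suffix_cons_iff] at h
      rcases h with h | h
      · refine ⟨z :: v, List.suffix_refl _, ?_⟩
        rw [h]; simp [mu_cons]
      · obtain ⟨t, ht1, ht2⟩ := ih h
        exact ⟨t, ht1.trans (List.suffix_cons z v), ht2⟩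
    · rw [show mu x (z :: v) ++ [x] = x :: z :: (mu x v ++ [x]) by simp [mu_cons, hz]] at h
      rw [List.suffix_cons_iff] at h
      rcases h with h | h
      · refine ⟨z :: v, List.suffix_refl _, ?_⟩
        rw [h]; simp [mu_cons, hz]
      · rw [List.suffix_cons_iff] at h
        rcases h with h | h
        · exact absurd (List.head_eq_of_cons_eq h).symm hz
        · obtain ⟨t, ht1, ht2⟩ := ih h
          exact ⟨t, ht1.trans (List.suffix_cons z v), ht2⟩

lemma suffix_head_nx {x : Bool} : ∀ {v r : List Bool}, (!x) :: r <:+ mu x v →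
    ∃ t, (!x) :: t <:+ v ∧ r = mu x t := by
  intro v
  induction v with
  | nil =>
    intro r h
    exact absurd (List.eq_nil_of_suffix_nil h) (by simp)
  | cons z v ih =>
    intro r h
    by_cases hz : z = x
    · subst hz
      rw [show mu z (z :: v) = z :: mu z v by simp [mu_cons]] at h
      rw [List.suffix_cons_iff] at h
      rcases h with h | h
      · exact absurd (List.head_eq_of_cons_eq h) (by simp)
      · obtain ⟨t, ht1, ht2⟩ := ih h
        exact ⟨t, ht1.trans (List.suffix_cons z v), ht2⟩
    · have hz' : z = !x := by cases z <;> cases x <;> simp_all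
      rw [show mu x (z :: v) = x :: z :: mu x v by simp [mu_cons, hz]] at h
      rw [List.suffix_cons_iff] at h
      rcases h with h | h
      · exact absurd (List.head_eq_of_cons_eq h) (by simp)
      · rw [List.suffix_cons_iff] at h
        rcases h with h | h
        · refine ⟨v, ?_, List.tail_eq_of_cons_eq h⟩
          rw [← hz']
        · obtain ⟨t, ht1, ht2⟩ := ih h
          exact ⟨t, ht1.trans (List.suffix_cons z v), ht2⟩

lemma suffix_drop_index {t u : List Bool} (h : t <:+ u) : ∃ i, t = u.drop i := by
  obtain ⟨p, hp⟩ := h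
  exact ⟨p.length, by rw [← hp, List.drop_left]⟩

lemma mu_length_suffix_mono {x : Bool} {t r : List Bool} (h : t <:+ r) :
    (mu x t).length ≤ (mu x r).length := by
  obtain ⟨p, hp⟩ := h
  rw [← hp, mu_append]
  simp

/-- transfer of a palindromic suffix: case where last letter is x -/
lemma pal_suffix_bound_x {x : Bool} {u : List Bool} {j : ℕ}
    (h : ((mu x u ++ [x]).drop j).reverse = (mu x u ++ [x]).drop j) :
    ((mu x u ++ [x]).drop j).length ≤ (mu x (u.drop (kk u))).length + 1 := by
  set A := mu x u ++ [x] with hA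
  set s := A.drop j with hs
  rcases List.eq_nil_or_concat s with hnil | ⟨s', c, hc⟩
  · simp [hnil]
  · -- s nonempty
    have hsuf : s <:+ A := List.drop_suffix j A
    have hlast : s.getLast? = some x := by
      obtain ⟨p, hp⟩ := hsuf
      have hx : A.getLast? = some x := List.getLast?_concat
      rw [← hp, List.getLast?_append_of_ne_nil p (by rw [hc]; simp)] at hx
      exact hx
    have hhead : s.head? = some x := by
      rw [← h, List.head?_reverse]; exact hlast
    obtain ⟨a, r, hr⟩ := List.exists_cons_of_ne_nil (show s ≠ [] by rw [hc]; simp)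
    rw [hr] at hhead
    simp at hhead
    rw [hhead] at hr
    obtain ⟨t, ht1, ht2⟩ := suffix_head_x (hr ▸ hsuf)
    have htpal : t.reverse = t := pal_of_mu_pal (x := x) (by rw [← ht2, ← hr]; exact h)
    obtain ⟨i, hi⟩ := suffix_drop_index ht1
    have hik : kk u ≤ i := kk_min (by rw [← hi, htpal])
    have htsub : t <:+ u.drop (kk u) := by
      rw [hi, ← Nat.sub_add_cancel hik, Nat.add_comm, ← List.drop_drop]
      exact List.drop_suffix _ _
    have := mu_length_suffix_mono (x := x) htsub
    rw [hr, ht2]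
    simpa using this

/-- transfer of a palindromic suffix: case where last letter is !x -/
lemma pal_suffix_bound_nx {x : Bool} {w : List Bool} {j : ℕ}
    (h : ((mu x (w ++ [!x])).drop j).reverse = (mu x (w ++ [!x])).drop j) :
    ((mu x (w ++ [!x])).drop j).length + 1 ≤ (mu x ((w ++ [!x]).drop (kk (w ++ [!x])))).length := by
  set u := w ++ [!x] with hu
  set A := mu x u with hA
  set s := A.drop j with hs
  have hku : kk u ≤ w.length := kk_min (by rw [hu, List.drop_left]; simp)
  have hdrop_ne : u.drop (kk u) ≠ [] := by
    rw [hu]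
    rw [List.drop_append_of_le_length hku]
    simp
  have hmu_ge : 1 ≤ (mu x (u.drop (kk u))).length := by
    rw [length_mu]
    cases hd : u.drop (kk u) with
    | nil => exact absurd hd hdrop_ne
    | cons a l => simp; omega
  rcases List.eq_nil_or_concat s with hnil | ⟨s', c, hc⟩
  · simp [hnil]; omega
  · have hsuf : s <:+ A := List.drop_suffix j A
    have hlast : s.getLast? = some (!x) := by
      obtain ⟨p, hp⟩ := hsuf
      have hAlast : A.getLast? = some (!x) := by
        rw [hA, hu, mu_append, show mu x [!x] = [x, !x] by simp [mu],
          show mu x w ++ [x, !x] = (mu x w ++ [x]) ++ [!x] by simp]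
        exact List.getLast?_concat
      rw [← hp, List.getLast?_append_of_ne_nil p (by rw [hc]; simp)] at hAlast
      exact hAlast
    have hhead : s.head? = some (!x) := by
      rw [← h, List.head?_reverse]; exact hlast
    obtain ⟨a, r, hr⟩ := List.exists_cons_of_ne_nil (show s ≠ [] by rw [hc]; simp)
    rw [hr] at hhead
    simp at hhead
    rw [hhead] at hr
    obtain ⟨t, ht1, ht2⟩ := suffix_head_nx (hr ▸ hsuf)
    -- show (!x) :: t is a palindrome
    have hpal : ((!x) :: t).reverse = (!x) :: t := by
      apply pal_of_mu_pal (x := x)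
      have hsh : mu x ((!x) :: t) ++ [x] = x :: (s ++ [x]) := by
        rw [mu_cons, if_neg (by simp), hr, ht2]
        simp
      rw [hsh, show (x :: (s ++ [x])).reverse = x :: (s.reverse ++ [x]) by simp, h]
    obtain ⟨i, hi⟩ := suffix_drop_index ht1
    have hik : kk u ≤ i := kk_min (by rw [← hi, hpal])
    have htsub : (!x) :: t <:+ u.drop (kk u) := by
      rw [hi, ← Nat.sub_add_cancel hik, Nat.add_comm, ← List.drop_drop]
      exact List.drop_suffix _ _
    have hmono := mu_length_suffix_mono (x := x) htsub
    rw [mu_cons, if_neg (by simp)] at hmono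
    simp at hmono
    rw [hr, ht2]
    simp only [List.length_cons]
    omega

lemma head_mu_concat (x : Bool) (z : List Bool) : ∃ rest, mu x z ++ [x] = x :: rest := by
  cases z with
  | nil => exact ⟨[], rfl⟩
  | cons a l =>
    refine ⟨(if a = x then mu x l else a :: mu x l) ++ [x], ?_⟩
    rw [mu_cons]; simp

lemma mu_split (x : Bool) (u : List Bool) :
    (mu x u).length
      = (mu x (u.take (kk u))).length + (mu x (u.drop (kk u))).length := by
  conv_lhs => rw [← List.take_append_drop (kk u) u]
  rw [mu_append]
  simp

lemma length_B (x : Bool) (u : List Bool) :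
    (mu x (palClosure u) ++ [x]).length
      = (mu x u).length + (mu x (u.take (kk u))).length + 1 := by
  rw [plc_eq, mu_append]
  simp [length_mu_rev]
  omega

theorem L1a (x : Bool) (u : List Bool) :
    palClosure (mu x u ++ [x]) = mu x (palClosure u) ++ [x] := by
  set A := mu x u ++ [x] with hA
  set B := mu x (palClosure u) ++ [x] with hB
  have hBpal : B.reverse = B := mu_pal_of_pal (pal_plc u)
  have hApre : A <+: B := by
    obtain ⟨rest, hrest⟩ := head_mu_concat x (u.take (kk u)).reverse
    rw [hA, hB, plc_eq]
    conv_rhs => rw [mu_append, List.append_assoc, hrest]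
    exact ⟨rest, by simp⟩
  have hmin : A.length + kk A ≤ B.length := plc_min hBpal hApre
  have hbound := pal_suffix_bound_x (u := u) (x := x) (j := kk A) (kk_spec A)
  rw [← hA, List.length_drop] at hbound
  have hkA : kk A ≤ A.length := kk_le A
  have hsplit := mu_split x u
  have hlenB := length_B x u
  rw [← hB] at hlenB
  have hlenA : A.length = (mu x u).length + 1 := by rw [hA]; simp
  have hlen : B.length = A.length + kk A := by omega
  exact (plc_unique hBpal hApre hlen).symm

theorem L1b (x : Bool) (w : List Bool) :
    palClosure (mu x w ++ [x, !x]) = mu x (palClosure (w ++ [!x])) ++ [x] := by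
  set u := w ++ [!x] with hu
  have hAu : mu x w ++ [x, !x] = mu x u := by
    rw [hu, mu_append, show mu x [!x] = [x, !x] by simp [mu]]
  rw [hAu]
  set A := mu x u with hA
  set B := mu x (palClosure u) ++ [x] with hB
  have hBpal : B.reverse = B := mu_pal_of_pal (pal_plc u)
  have hApre : A <+: B := by
    rw [hA, hB, plc_eq]
    conv_rhs => rw [mu_append, List.append_assoc]
    exact List.prefix_append _ _
  have hmin : A.length + kk A ≤ B.length := plc_min hBpal hApre
  have hbound := pal_suffix_bound_nx (w := w) (x := x) (j := kk A) (by rw [← hu, ← hA]; exact kk_spec A)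
  rw [← hu, ← hA, List.length_drop] at hbound
  have hkA : kk A ≤ A.length := kk_le A
  have hsplit := mu_split x u
  have hlenB := length_B x u
  rw [← hB] at hlenB
  have hlenA : A.length = (mu x u).length := by rw [hA]
  have hlen : B.length = A.length + kk A := by omega
  exact (plc_unique hBpal hApre hlen).symm

lemma psi_append_singleton (l : List Bool) (y : Bool) :
    psi (l ++ [y]) = palClosure (psi l ++ [y]) := by
  simp [psi, List.foldl_append]

theorem justin (x : Bool) (v : List Bool) :
    psi (x :: v) = mu x (psi v) ++ [x] := by
  induction v using List.reverseRecOn with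
  | nil =>
    show palClosure ([] ++ [x]) = mu x (psi []) ++ [x]
    have h0 : kk [x] = 0 := Nat.le_zero.mp (kk_min (by simp))
    simp only [List.nil_append]
    rw [plc_eq, h0]
    simp [psi, mu]
  | append_singleton v' y ih =>
    have h1 : x :: (v' ++ [y]) = (x :: v') ++ [y] := rfl
    rw [h1, psi_append_singleton, ih, psi_append_singleton]
    rcases Bool.eq_or_eq_not y x with hy | hy
    · subst hy
      rw [show mu y (psi v') ++ [y] ++ [y] = mu y (psi v' ++ [y]) ++ [y] by
        rw [mu_append]; simp [mu]]
      exact L1a y (psi v' ++ [y])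
    · subst hy
      rw [show mu x (psi v') ++ [x] ++ [!x] = mu x (psi v') ++ [x, !x] by simp]
      exact L1b x (psi v')

lemma count_fb (w : List Bool) : w.count false + w.count true = w.length := by
  induction w with
  | nil => rfl
  | cons a l ih => cases a <;> simp [List.count_cons, ih] <;> omega

/-! ### matrix part -/

abbrev M2 := ℕ × ℕ × ℕ × ℕ

def pmul : M2 → M2 → M2 :=
  fun (a, b, c, d) (p, q, r, s) => (a*p+b*r, a*q+b*s, c*p+d*r, c*q+d*s)

def mM (x : Bool) : M2 := if x then (1,0,1,1) else (1,1,0,1)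

def Pm : List Bool → M2
  | [] => (1,0,0,1)
  | x :: v => pmul (mM x) (Pm v)

lemma pmul_one (A : M2) : pmul A (1,0,0,1) = A := by
  obtain ⟨a, b, c, d⟩ := A
  simp [pmul]

lemma pmul_assoc (A B C : M2) : pmul (pmul A B) C = pmul A (pmul B C) := by
  obtain ⟨a, b, c, d⟩ := A
  obtain ⟨p, q, r, s⟩ := B
  obtain ⟨e, f, g, h⟩ := C
  simp only [pmul, Prod.mk.injEq]
  refine ⟨?_, ?_, ?_, ?_⟩ <;> ring

lemma Pm_append (u v : List Bool) : Pm (u ++ v) = pmul (Pm u) (Pm v) := by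
  induction u with
  | nil =>
    show Pm v = pmul (1,0,0,1) (Pm v)
    obtain ⟨p, q, r, s⟩ := Pm v
    simp [pmul]
  | cons x u ih =>
    show Pm (x :: (u ++ v)) = _
    rw [show Pm (x :: (u ++ v)) = pmul (mM x) (Pm (u ++ v)) from rfl, ih,
      show Pm (x :: u) = pmul (mM x) (Pm u) from rfl, pmul_assoc]

def Tt : M2 → M2 := fun (p, q, r, s) => (s, q, r, p)

lemma Tt_pmul (A B : M2) : Tt (pmul A B) = pmul (Tt B) (Tt A) := by
  obtain ⟨a, b, c, d⟩ := A
  obtain ⟨p, q, r, s⟩ := B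
  simp only [pmul, Tt, Prod.mk.injEq]
  refine ⟨?_, ?_, ?_, ?_⟩ <;> ring

lemma Tt_mM (x : Bool) : Tt (mM x) = mM x := by cases x <;> rfl

lemma Pm_reverse (v : List Bool) : Pm v.reverse = Tt (Pm v) := by
  induction v with
  | nil => rfl
  | cons x v ih =>
    rw [List.reverse_cons, Pm_append, ih,
      show Pm [x] = pmul (mM x) (1,0,0,1) from rfl, pmul_one,
      show Pm (x :: v) = pmul (mM x) (Pm v) from rfl, Tt_pmul, Tt_mM]

def sum4 : M2 → ℕ := fun (p, q, r, s) => p + q + r + s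

lemma sum4_Tt (A : M2) : sum4 (Tt A) = sum4 A := by
  obtain ⟨a, b, c, d⟩ := A
  simp [Tt, sum4]
  omega

lemma pmul_mfalse (P : M2) : pmul (mM false) P
    = (P.1 + P.2.2.1, P.2.1 + P.2.2.2, P.2.2.1, P.2.2.2) := by
  obtain ⟨p, q, r, s⟩ := P
  simp [pmul, mM]

lemma pmul_mtrue (P : M2) : pmul (mM true) P
    = (P.1, P.2.1, P.1 + P.2.2.1, P.2.1 + P.2.2.2) := by
  obtain ⟨p, q, r, s⟩ := P
  simp [pmul, mM]

lemma inv (v : List Bool) :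
    (Pm v).1 + (Pm v).2.1 = (psi v).count false + 1 ∧
    (Pm v).2.2.1 + (Pm v).2.2.2 = (psi v).count true + 1 := by
  induction v with
  | nil => exact ⟨rfl, rfl⟩
  | cons x v ih =>
    obtain ⟨ih1, ih2⟩ := ih
    have hlen := count_fb (psi v)
    rw [justin]
    cases x
    · rw [show Pm (false :: v) = pmul (mM false) (Pm v) from rfl, pmul_mfalse]
      have h1 : (mu false (psi v) ++ [false]).count false = (psi v).length + 1 := by
        rw [List.count_append, count_mu_self]
        simp
      have h2 : (mu false (psi v) ++ [false]).count true = (psi v).count true := by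
        rw [List.count_append]
        have := count_mu_not false (psi v)
        simp at this
        rw [this]
        simp
      dsimp only
      rw [h1, h2]
      omega
    · rw [show Pm (true :: v) = pmul (mM true) (Pm v) from rfl, pmul_mtrue]
      have h1 : (mu true (psi v) ++ [true]).count true = (psi v).length + 1 := by
        rw [List.count_append, count_mu_self]
        simp
      have h2 : (mu true (psi v) ++ [true]).count false = (psi v).count false := by
        rw [List.count_append]
        have := count_mu_not true (psi v)
        simp at this
        rw [this]
        simp
      dsimp only
      rw [h1, h2]
      omega

lemma sum4_eq (A : M2) : sum4 A = A.1 + A.2.1 + A.2.2.1 + A.2.2.2 := by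
  obtain ⟨p, q, r, s⟩ := A
  rfl

lemma length_psi_eq (v : List Bool) : (psi v).length + 2 = sum4 (Pm v) := by
  obtain ⟨h1, h2⟩ := inv v
  have h3 := count_fb (psi v)
  rw [sum4_eq]
  omega

end St5

theorem stmt5 (v : List Bool) : (psi v).length = (psi v.reverse).length := by
  have h1 := St5.length_psi_eq v
  have h2 := St5.length_psi_eq v.reverse
  rw [St5.Pm_reverse, St5.sum4_Tt] at h2
  omega
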